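/- Let $E$ and $F$ be hyperconvex (injective) metric spaces. Then the metric gluing of $E$ and $F$ along a single point (metric wedge, with distance $d(e,f) = d_E(e,e_0) + d_F(f_0,f)$ for $e \in E$, $f \in F$ glued at $e_0 \sim f_0$) is hyperconvex. -/
import Mathlib


universe u

/-- A metric space is hyperconvex if every family of pairwise-intersecting closed balls
(`dist (p i) (p j) ≤ r i + r j` with `r i > 0`) has a common point. -/
def Hyperconvex (E : Type u) [MetricSpace E] : Prop :=
  ∀ (ι : Type u) (p : ι → E) (r : ι → ℝ), (∀ i, 0 < r i) →
    (∀ i j, dist (p i) (p j) ≤ r i + r j) → ∃ q : E, ∀ i, dist (p i) q ≤ r i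

lemma hyperconvex_aux {Z : Type u} [MetricSpace Z] (E : Set Z) (z0 : Z) (hz0 : z0 ∈ E)
    (hE : Hyperconvex ↥E) (ι : Type u) (p : ι → Z) (r : ι → ℝ)
    (hr : ∀ i, 0 < r i) (hpair : ∀ i j, dist (p i) (p j) ≤ r i + r j)
    (hout : ∀ i, p i ∉ E → dist (p i) z0 < r i)
    (hsum : ∀ i j, p i ∈ E → p j ∉ E →
      dist (p i) z0 + dist z0 (p j) ≤ dist (p i) (p j)) :
    ∃ q : Z, ∀ i, dist (p i) q ≤ r i := by
  classical
  set c : ι → ↥E := fun i => if h : p i ∈ E then ⟨p i, h⟩ else ⟨z0, hz0⟩ with hc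
  set s : ι → ℝ := fun i => if p i ∈ E then r i else r i - dist (p i) z0 with hs
  have hspos : ∀ i, 0 < s i := by
    intro i
    by_cases h : p i ∈ E
    · simp [hs, h, hr i]
    · simp only [hs, h, if_false]
      linarith [hout i h]
  have hcd : ∀ i j, dist (c i) (c j) ≤ s i + s j := by
    intro i j
    have hdist : dist (c i) (c j) = dist ((c i) : Z) ((c j) : Z) := rfl
    by_cases hi : p i ∈ E <;> by_cases hj : p j ∈ E
    · simp only [hdist, hc, hs, hi, hj, dif_pos, if_pos]
      exact hpair i j
    · simp only [hdist, hc, hs, hi, hj, dif_pos, dif_neg, if_pos, if_neg, not_false_iff,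
        Subtype.dist_eq]
      have := hsum i j hi hj
      have := hpair i j
      have := dist_nonneg (x := z0) (y := p j)
      linarith [dist_comm z0 (p j), dist_comm (p i) z0]
    · simp only [hdist, hc, hs, hi, hj, dif_pos, dif_neg, if_pos, if_neg, not_false_iff,
        Subtype.dist_eq]
      have := hsum j i hj hi
      have := hpair j i
      have := dist_nonneg (x := z0) (y := p i)
      linarith [dist_comm z0 (p i), dist_comm (p j) z0, dist_comm (p i) (p j)]
    · simp only [hdist, hc, hs, hi, hj, dif_neg, if_neg, not_false_iff, dist_self]
      have := hout i hi
      have := hout j hj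
      linarith
  obtain ⟨q, hq⟩ := hE ι c s hspos hcd
  refine ⟨(q : Z), fun i => ?_⟩
  have hqi : dist ((c i) : Z) ((q : ↥E) : Z) ≤ s i := hq i
  by_cases hi : p i ∈ E
  · simpa [hc, hs, hi] using hqi
  · simp only [hc, hs, hi, dif_neg, if_neg, not_false_iff] at hqi
    calc dist (p i) (q : Z) ≤ dist (p i) z0 + dist z0 (q : Z) := dist_triangle _ _ _
      _ ≤ dist (p i) z0 + (r i - dist (p i) z0) := by linarith
      _ = r i := by ring

/-- The metric gluing (wedge) of two hyperconvex spaces along a point is hyperconvex: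
if `Z = E ∪ F` with `E ∩ F = {z0}` and `dist e f = dist e z0 + dist z0 f` for
`e ∈ E`, `f ∈ F`, and both `E` and `F` are hyperconvex, then so is `Z`. -/
theorem stmt14 {Z : Type u} [MetricSpace Z] (E F : Set Z) (z0 : Z)
    (hunion : E ∪ F = Set.univ) (hinter : E ∩ F = {z0})
    (hglue : ∀ e ∈ E, ∀ f ∈ F, dist e f = dist e z0 + dist z0 f)
    (hE : Hyperconvex ↥E) (hF : Hyperconvex ↥F) :
    Hyperconvex Z := by
  classical
  have hz0 : z0 ∈ E ∩ F := by rw [hinter]; exact rfl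
  have hmem : ∀ z : Z, z ∈ E ∨ z ∈ F := by
    intro z
    have : z ∈ E ∪ F := by rw [hunion]; trivial
    exact this
  intro ι p r hr hpair
  by_cases h1 : ∃ i0, p i0 ∈ E ∧ r i0 < dist (p i0) z0
  · obtain ⟨i0, hi0E, hi0r⟩ := h1
    refine hyperconvex_aux E z0 hz0.1 hE ι p r hr hpair ?_ ?_
    · intro i hiE
      have hiF : p i ∈ F := (hmem (p i)).resolve_left hiE
      have := hglue (p i0) hi0E (p i) hiF
      have := hpair i0 i
      rw [dist_comm]
      linarith
    · intro i j hiE hjE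
      have hjF : p j ∈ F := (hmem (p j)).resolve_left hjE
      exact le_of_eq (hglue (p i) hiE (p j) hjF).symm
  · by_cases h2 : ∃ i0, p i0 ∈ F ∧ r i0 < dist (p i0) z0
    · obtain ⟨i0, hi0F, hi0r⟩ := h2
      refine hyperconvex_aux F z0 hz0.2 hF ι p r hr hpair ?_ ?_
      · intro i hiF
        have hiE : p i ∈ E := (hmem (p i)).resolve_right hiF
        have hg := hglue (p i) hiE (p i0) hi0F
        have := hpair i i0
        linarith [dist_comm (p i0) z0]
      · intro i j hiF hjF
        have hjE : p j ∈ E := (hmem (p j)).resolve_right hjF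
        have hg := hglue (p j) hjE (p i) hiF
        rw [dist_comm (p i) (p j), dist_comm (p i) z0, dist_comm z0 (p j)]
        linarith [le_of_eq hg]
    · push_neg at h1 h2
      refine ⟨z0, fun i => ?_⟩
      rcases hmem (p i) with hiE | hiF
      · exact h1 i hiE
      · exact h2 i hiF
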